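/- Let G be a finite p-group with |Z(G)| = p such that (G, Z(G)) is a Camina pair. Then |G| divides |Aut(G)|. -/

import Mathlib

/-- `(G, Z(G))` is a Camina pair: `Z(G)` is a nontrivial proper (normal) subgroup and
`x * Z(G) ⊆ xᴳ` for every `x ∈ G \ Z(G)`. -/
def IsCaminaPairCenter (G : Type*) [Group G] : Prop :=
  Subgroup.center G ≠ ⊥ ∧ Subgroup.center G ≠ ⊤ ∧
    ∀ x : G, x ∉ Subgroup.center G → ∀ z ∈ Subgroup.center G, IsConj x (x * z)

set_option linter.unusedSectionVars false
set_option maxHeartbeats 1000000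

namespace CaminaAux

open Subgroup

variable {G : Type*} [Group G]

/-- `dd u g = g⁻¹ * u * g * u⁻¹`, a commutator gadget. -/
def dd (u g : G) : G := g⁻¹ * u * g * u⁻¹

lemma conj_dd (u g : G) : g⁻¹ * u * g = dd u g * u := by
  simp [dd, mul_assoc]

lemma dd_eq_one_iff (u g : G) : dd u g = 1 ↔ u * g = g * u := by
  unfold dd
  rw [mul_inv_eq_one]
  constructor
  · intro h
    calc u * g = g * (g⁻¹ * u * g) := by group
      _ = g * u := by rw [h]
  · intro h
    calc g⁻¹ * u * g = g⁻¹ * (u * g) := by group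
      _ = g⁻¹ * (g * u) := by rw [h]
      _ = u := by group

lemma center_conj_eq {c : G} (hc : c ∈ center G) (h : G) : h⁻¹ * c * h = c := by
  have := (Subgroup.mem_center_iff.mp hc h).symm
  calc h⁻¹ * c * h = h⁻¹ * (c * h) := by group
    _ = h⁻¹ * (h * c) := by rw [← this]
    _ = c := by group

lemma dd_mul_right {u g : G} (hc : dd u g ∈ center G) (h : G) :
    dd u (g * h) = dd u g * dd u h := by
  have h1 : dd u (g * h) = h⁻¹ * (g⁻¹ * u * g) * h * u⁻¹ := by unfold dd; group
  rw [h1, conj_dd u g]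
  have h2 : h⁻¹ * (dd u g * u) * h * u⁻¹ = (h⁻¹ * dd u g * h) * (h⁻¹ * u * h * u⁻¹) := by
    group
  rw [h2, center_conj_eq hc]
  rfl

lemma dd_mul_left {s g : G} (hs : dd s g ∈ center G) (t : G) :
    dd (t * s) g = dd t g * dd s g := by
  have h1 : dd (t * s) g = (g⁻¹ * t * g) * dd s g * t⁻¹ := by unfold dd; group
  rw [h1]
  have h2 : g⁻¹ * t * g * dd s g * t⁻¹ = g⁻¹ * t * g * (dd s g * t⁻¹) := by group
  rw [h2, Subgroup.mem_center_iff.mp hs t⁻¹ |>.symm]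
  unfold dd; group

lemma dd_inv_left {t g : G} (hc : dd t g ∈ center G) : dd t⁻¹ g = (dd t g)⁻¹ := by
  have h1 : dd t⁻¹ g = t⁻¹ * (dd t g)⁻¹ * t := by unfold dd; group
  rw [h1]
  have := center_conj_eq ((center G).inv_mem hc) t
  calc t⁻¹ * (dd t g)⁻¹ * t = (dd t g)⁻¹ := this

lemma dd_pow_left {t g : G} (hc : dd t g ∈ center G) (n : ℕ) :
    dd (t ^ n) g = dd t g ^ n := by
  induction n with
  | zero => simp [dd]
  | succ n ih =>
      rw [pow_succ, dd_mul_left hc (t ^ n), ih, pow_succ]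

lemma exists_pow_eq {z x : G} (hz : 0 < orderOf z) (hx : x ∈ zpowers z) :
    ∃ k, k < orderOf z ∧ z ^ k = x := by
  obtain ⟨m, hm⟩ := hx
  have h0 : (orderOf z : ℤ) ≠ 0 := by exact_mod_cast hz.ne'
  have h1 : 0 ≤ m % (orderOf z : ℤ) := Int.emod_nonneg _ h0
  have h2 : m % (orderOf z : ℤ) < orderOf z := Int.emod_lt_of_pos _ (by exact_mod_cast hz)
  refine ⟨(m % (orderOf z : ℤ)).toNat, by omega, ?_⟩
  rw [← zpow_natCast, Int.toNat_of_nonneg h1, zpow_mod_orderOf]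
  exact hm

lemma pow_inj {z : G} {k l : ℕ} (hk : k < orderOf z) (hl : l < orderOf z)
    (h : z ^ k = z ^ l) : k = l :=
  pow_injOn_Iio_orderOf (Set.mem_Iio.mpr hk) (Set.mem_Iio.mpr hl) h

lemma choose_two_add (a b : ℕ) : (a + b).choose 2 = a.choose 2 + b.choose 2 + a * b := by
  induction b with
  | zero => simp
  | succ n ih =>
      have h1 : a + (n + 1) = (a + n) + 1 := by ring
      have h2 : (a + n + 1).choose 2 = (a + n).choose 1 + (a + n).choose 2 :=
        Nat.choose_succ_succ _ _
      have h3 : (n + 1).choose 2 = n.choose 1 + n.choose 2 := Nat.choose_succ_succ _ _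
      rw [h1, h2, ih]
      simp [Nat.choose_one_right, h3]
      ring

lemma zpowers_pow_eq_one {z x : G} (hx : x ∈ zpowers z) {N : ℕ} (hN : z ^ N = 1) :
    x ^ N = 1 := by
  obtain ⟨m, rfl⟩ := hx
  have h1 : (z ^ m) ^ N = z ^ (m * (N : ℤ)) := by
    rw [← zpow_natCast (z ^ m) N, ← zpow_mul]
  rw [h1, mul_comm, zpow_mul, zpow_natCast, hN, one_zpow]


section Mu

variable [Finite G]

lemma exists_aut_of_mu (μ : G → G)
    (hmul : ∀ g h : G, μ (g * h) = (h⁻¹ * μ g * h) * μ h)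
    (hker : ∀ g : G, g * μ g = 1 → g = 1) :
    ∃ α : MulAut G, ∀ g, α g = g * μ g := by
  have hone : μ 1 = 1 := by
    have := hmul 1 1
    simp only [mul_one, one_mul, inv_one] at this
    exact left_eq_mul.mp this
  let F : G →* G :=
    { toFun := fun g => g * μ g
      map_one' := by simp [hone]
      map_mul' := by
        intro g h
        rw [hmul]
        group }
  have hinj : Function.Injective F := (injective_iff_map_eq_one F).mpr hker
  have hbij : Function.Bijective F := ⟨hinj, Finite.surjective_of_injective hinj⟩
  exact ⟨MulEquiv.ofBijective F hbij, fun g => rfl⟩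

lemma aut_pow_apply {α : MulAut G} {μ : G → G} (happ : ∀ g, α g = g * μ g)
    (hfix : ∀ g, μ (g * μ g) = μ g) (n : ℕ) (g : G) :
    (α ^ n) g = g * (μ g) ^ n := by
  induction n generalizing g with
  | zero => simp
  | succ n ih =>
      have h1 : (α ^ (n + 1)) g = (α ^ n) (α g) := by
        rw [pow_succ]
        rfl
      rw [h1, happ g, ih (g * μ g), hfix g, pow_succ', ← mul_assoc]

lemma mu_of_inner {α : MulAut G} {μ : G → G} (happ : ∀ g, α g = g * μ g)
    {t : G} (ht : α = MulAut.conj t) {z c : G} (hzc : z ∈ Subgroup.center G)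
    (hconj : c * t * c⁻¹ = t * z) : μ c = z⁻¹ := by
  have h1 : ∀ g : G, t * g * t⁻¹ = g * μ g := by
    intro g
    rw [← happ, ht]
    rfl
  have h2 : c⁻¹ * t * c = μ c * t := by
    have h := h1 c
    calc c⁻¹ * t * c = c⁻¹ * (t * c * t⁻¹) * t := by group
      _ = c⁻¹ * (c * μ c) * t := by rw [h]
      _ = μ c * t := by group
  have h3 : c⁻¹ * t * c = t * z⁻¹ := by
    have h4 : c⁻¹ * (c * t * c⁻¹) * c = t := by group
    rw [hconj] at h4
    have h5 : z * c = c * z := (Subgroup.mem_center_iff.mp hzc c).symm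
    have h6 : c⁻¹ * (t * z) * c = c⁻¹ * t * c * z := by
      calc c⁻¹ * (t * z) * c = c⁻¹ * t * (z * c) := by group
        _ = c⁻¹ * t * (c * z) := by rw [h5]
        _ = c⁻¹ * t * c * z := by group
    rw [h6] at h4
    exact eq_mul_inv_of_mul_eq h4
  have h7 : μ c * t = t * z⁻¹ := by rw [← h2, h3]
  have h8 : μ c = t * z⁻¹ * t⁻¹ := by
    rw [← h7]; group
  have h9 : t * z⁻¹ * t⁻¹ = (t⁻¹)⁻¹ * z⁻¹ * t⁻¹ := by group
  rw [h8, h9, center_conj_eq ((Subgroup.center G).inv_mem hzc) t⁻¹]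

end Mu

section Assembly

variable [Finite G]

instance : Finite (MulAut G) :=
  Finite.of_injective (fun (e : MulAut G) => (e : G → G)) DFunLike.coe_injective

lemma conj_ker_eq_center : (MulAut.conj : G →* MulAut G).ker = Subgroup.center G := by
  ext g
  constructor
  · intro h
    rw [Subgroup.mem_center_iff]
    intro x
    have h1 : (MulAut.conj g) x = x := by
      rw [show (MulAut.conj g : MulAut G) = 1 from h]
      rfl
    have h2 : g * x * g⁻¹ = x := h1
    calc x * g = (g * x * g⁻¹) * g := by rw [h2]
      _ = g * x := by group
  · intro h
    have : ∀ x : G, (MulAut.conj g) x = x := by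
      intro x
      have h2 : x * g = g * x := Subgroup.mem_center_iff.mp h x
      show g * x * g⁻¹ = x
      rw [← h2]
      group
    exact MulEquiv.ext this

lemma inn_normal : ((MulAut.conj : G →* MulAut G).range).Normal := by
  constructor
  intro x hx ψ
  obtain ⟨g, rfl⟩ := hx
  refine ⟨ψ g, ?_⟩
  ext y
  show ψ g * y * (ψ g)⁻¹ = ψ ((MulAut.conj g) (ψ⁻¹ y))
  show ψ g * y * (ψ g)⁻¹ = ψ (g * ψ⁻¹ y * g⁻¹)
  rw [map_mul, map_mul, map_inv]
  have : ψ (ψ⁻¹ y) = y := ψ.apply_symm_apply y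
  rw [this]

lemma card_dvd_of_exists_noninner {p : ℕ} [Fact p.Prime]
    (hZ : Nat.card (Subgroup.center G) = p)
    (h : ∃ α : MulAut G, α ^ (p ^ 2) = 1 ∧ ∀ t : G, α ≠ MulAut.conj t) :
    Nat.card G ∣ Nat.card (MulAut G) := by
  obtain ⟨α, hord, hni⟩ := h
  set Inn : Subgroup (MulAut G) := (MulAut.conj : G →* MulAut G).range with hInn
  haveI : Inn.Normal := inn_normal
  have hcardInn : Nat.card Inn = (Subgroup.center G).index := by
    have e := QuotientGroup.quotientKerEquivRange (MulAut.conj : G →* MulAut G)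
    have : Nat.card (G ⧸ (MulAut.conj : G →* MulAut G).ker) = Nat.card Inn :=
      Nat.card_congr e.toEquiv
    rw [conj_ker_eq_center] at this
    rw [← this]
    rfl
  have hmem : α ∉ Inn := by
    intro hmem
    obtain ⟨t, ht⟩ := hmem
    exact hni t ht.symm
  set q : MulAut G ⧸ Inn := QuotientGroup.mk α with hq
  have hq1 : q ≠ 1 := by
    rw [hq, Ne, QuotientGroup.eq_one_iff]
    exact hmem
  have hqp : q ^ (p ^ 2) = 1 := by
    rw [hq, ← QuotientGroup.mk_pow, hord]
    rfl
  have hdvd : orderOf q ∣ p ^ 2 := orderOf_dvd_of_pow_eq_one hqp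
  obtain ⟨k, hk, hkk⟩ := (Nat.dvd_prime_pow Fact.out).mp hdvd
  have hk0 : k ≠ 0 := by
    rintro rfl
    rw [pow_zero] at hkk
    exact hq1 (orderOf_eq_one_iff.mp hkk)
  have hpord : p ∣ orderOf q := by
    rw [hkk]
    exact dvd_pow_self p hk0
  have hindex : p ∣ Inn.index := by
    refine hpord.trans ?_
    have : orderOf q ∣ Nat.card (MulAut G ⧸ Inn) := orderOf_dvd_natCard q
    exact this
  obtain ⟨m, hm⟩ := hindex
  have e1 : Nat.card G = Nat.card (Subgroup.center G) * (Subgroup.center G).index :=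
    (Subgroup.card_mul_index _).symm
  have e2 : Nat.card (MulAut G) = Nat.card Inn * Inn.index :=
    (Subgroup.card_mul_index _).symm
  rw [e1, e2, hcardInn, hm, hZ]
  exact ⟨m, by ring⟩

end Assembly

section Tier1

variable [Finite G] {p : ℕ} [Fact p.Prime] {z : G}

lemma tier1 (hzo : orderOf z = p) (hzc : z ∈ center G)
    (u : G) (hu : u ∉ center G)
    (hud : ∀ g : G, dd u g ∈ zpowers z)
    (hup : u ^ p * z ^ (p.choose 2) = 1)
    (hcam : ∀ t : G, t ∉ center G → ∃ c : G, c * t * c⁻¹ = t * z) :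
    ∃ α : MulAut G, α ^ (p ^ 2) = 1 ∧ ∀ t : G, α ≠ MulAut.conj t := by
  have hp : p.Prime := Fact.out
  have hp0 : 0 < p := hp.pos
  have hzp : z ^ p = 1 := by rw [← hzo]; exact pow_orderOf_eq_one z
  have hupz : u ^ p = (z ^ (p.choose 2))⁻¹ := eq_inv_of_mul_eq_one_left hup
  have hcz : ∀ (x : G) (k : ℕ), Commute x (z ^ k) :=
    fun x k => (show Commute x z from Subgroup.mem_center_iff.mp hzc x).pow_right k
  have swap : ∀ (k : ℕ) (x : G), z ^ k * x = x * z ^ k :=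
    fun k x => (Subgroup.mem_center_iff.mp (pow_mem hzc k) x).symm
  have hddc : ∀ g : G, dd u g ∈ center G := fun g => (zpowers_le.mpr hzc) (hud g)
  have hdl : ∀ g : G, ∃ k, k < p ∧ z ^ k = dd u g := by
    intro g
    have h := exists_pow_eq (z := z) (x := dd u g) (by rw [hzo]; exact hp0) (hud g)
    rwa [hzo] at h
  choose A hA1 hA2 using hdl
  have hAmod : ∀ g h : G, A (g * h) = (A g + A h) % p := by
    intro g h
    apply pow_inj (z := z) (by rw [hzo]; exact hA1 _)
      (by rw [hzo]; exact Nat.mod_lt _ hp0)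
    rw [hA2, dd_mul_right (hddc g) h, ← hA2 g, ← hA2 h, ← pow_add]
    rw [show ((A g + A h) % p) = ((A g + A h) % orderOf z) from by rw [hzo],
      pow_mod_orderOf]
  set μ : G → G := fun g => u ^ A g * z ^ ((A g).choose 2) with hμ
  have key : ∀ a b : ℕ, a < p → b < p →
      u ^ (a + b) * z ^ (a * b + a.choose 2 + b.choose 2)
        = u ^ ((a + b) % p) * z ^ (((a + b) % p).choose 2) := by
    intro a b ha hb
    rcases lt_or_ge (a + b) p with hlt | hge
    · rw [Nat.mod_eq_of_lt hlt]
      have : a * b + a.choose 2 + b.choose 2 = (a + b).choose 2 := by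
        rw [choose_two_add]; ring
      rw [this]
    · have hab : a + b = (a + b - p) + p := by omega
      set r := a + b - p with hr
      have hrp : r < p := by omega
      have hmod : (a + b) % p = r := by
        rw [hab, Nat.add_mod_right, Nat.mod_eq_of_lt hrp]
      have hexp : a * b + a.choose 2 + b.choose 2 = (a + b).choose 2 := by
        rw [choose_two_add]; ring
      have hch : (a + b).choose 2 = r.choose 2 + (p.choose 2 + r * p) := by
        rw [hab, choose_two_add]; ring
      rw [hexp, hch, hmod, hab]
      rw [pow_add, pow_add, pow_add, hupz]
      have h1 : z ^ (r * p) = 1 := by rw [mul_comm, pow_mul, hzp, one_pow]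
      have h2 : z ^ (r.choose 2) * z ^ (p.choose 2)
          = z ^ (p.choose 2) * z ^ (r.choose 2) := by
        rw [← pow_add, ← pow_add, Nat.add_comm]
      rw [h1, mul_one, h2]
      group
  have hconj : ∀ g h : G, h⁻¹ * u ^ A g * h = z ^ (A h * A g) * u ^ A g := by
    intro g h
    have e1 : h⁻¹ * u ^ A g * h = (h⁻¹ * u * h) ^ A g := by
      have e2 := map_pow (MulAut.conj h⁻¹) u (A g)
      simp only [MulAut.conj_apply, inv_inv] at e2
      exact e2
    rw [e1, conj_dd, ← hA2 h, ((hcz u (A h)).symm).mul_pow, ← pow_mul]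
  have hmul : ∀ g h : G, μ (g * h) = (h⁻¹ * μ g * h) * μ h := by
    intro g h
    have step0 : h⁻¹ * (u ^ A g * z ^ ((A g).choose 2)) * h
        = (h⁻¹ * u ^ A g * h) * z ^ ((A g).choose 2) := by
      calc h⁻¹ * (u ^ A g * z ^ ((A g).choose 2)) * h
          = h⁻¹ * u ^ A g * (z ^ ((A g).choose 2) * h) := by group
        _ = h⁻¹ * u ^ A g * (h * z ^ ((A g).choose 2)) := by rw [swap]
        _ = (h⁻¹ * u ^ A g * h) * z ^ ((A g).choose 2) := by group
    show μ (g * h) = (h⁻¹ * (u ^ A g * z ^ ((A g).choose 2)) * h) * μ h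
    rw [step0, hconj g h]
    show μ (g * h) = (z ^ (A h * A g) * u ^ A g * z ^ ((A g).choose 2))
        * (u ^ A h * z ^ ((A h).choose 2))
    have main : (z ^ (A h * A g) * u ^ A g * z ^ ((A g).choose 2))
        * (u ^ A h * z ^ ((A h).choose 2))
        = u ^ (A g + A h)
          * z ^ (A g * A h + (A g).choose 2 + (A h).choose 2) := by
      calc (z ^ (A h * A g) * u ^ A g * z ^ ((A g).choose 2))
            * (u ^ A h * z ^ ((A h).choose 2))
          = z ^ (A h * A g) * u ^ A g * (z ^ ((A g).choose 2) * u ^ A h)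
              * z ^ ((A h).choose 2) := by group
        _ = z ^ (A h * A g) * u ^ A g * (u ^ A h * z ^ ((A g).choose 2))
              * z ^ ((A h).choose 2) := by rw [swap ((A g).choose 2) (u ^ A h)]
        _ = z ^ (A h * A g) * (u ^ A g * u ^ A h)
              * (z ^ ((A g).choose 2) * z ^ ((A h).choose 2)) := by group
        _ = z ^ (A h * A g) * u ^ (A g + A h)
              * z ^ ((A g).choose 2 + (A h).choose 2) := by
            rw [← pow_add, ← pow_add]
        _ = u ^ (A g + A h) * z ^ (A h * A g)
              * z ^ ((A g).choose 2 + (A h).choose 2) := by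
            rw [swap (A h * A g) (u ^ (A g + A h))]
        _ = u ^ (A g + A h)
              * z ^ (A h * A g + ((A g).choose 2 + (A h).choose 2)) := by
            rw [mul_assoc, ← pow_add]
        _ = u ^ (A g + A h)
              * z ^ (A g * A h + (A g).choose 2 + (A h).choose 2) := by
            congr 1
            ring
    rw [main, key (A g) (A h) (hA1 g) (hA1 h)]
    show u ^ A (g * h) * z ^ ((A (g * h)).choose 2) = _
    rw [hAmod g h]
  have hcomm_mu : ∀ g : G, Commute u (μ g) := by
    intro g
    exact Commute.mul_right ((Commute.refl u).pow_right (A g)) (hcz u _)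
  have hker : ∀ g : G, g * μ g = 1 → g = 1 := by
    intro g hg
    have hgeq : g = (μ g)⁻¹ := eq_inv_of_mul_eq_one_left hg
    have hcomm : u * g = g * u := by
      rw [hgeq]
      exact ((hcomm_mu g).inv_right).eq
    have h0 : dd u g = 1 := (dd_eq_one_iff u g).mpr hcomm
    have hA0 : A g = 0 := by
      apply pow_inj (z := z) (by rw [hzo]; exact hA1 g) (by rw [hzo]; exact hp0)
      rw [hA2, h0, pow_zero]
    have hmu1 : μ g = 1 := by
      show u ^ A g * z ^ ((A g).choose 2) = 1
      rw [hA0]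
      norm_num
    rw [hgeq, hmu1, inv_one]
  have hfix : ∀ g : G, μ (g * μ g) = μ g := by
    intro g
    have hddμ : dd u (μ g) = 1 := (dd_eq_one_iff u (μ g)).mpr (hcomm_mu g).eq
    have hAfix : A (g * μ g) = A g := by
      apply pow_inj (z := z) (by rw [hzo]; exact hA1 _) (by rw [hzo]; exact hA1 g)
      rw [hA2, dd_mul_right (hddc g) (μ g), hddμ, mul_one, hA2]
    show u ^ A (g * μ g) * z ^ ((A (g * μ g)).choose 2) = _
    rw [hAfix]
  have hupsq : u ^ (p ^ 2) = 1 := by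
    have : u ^ (p ^ 2) = (u ^ p) ^ p := by rw [← pow_mul, pow_two]
    rw [this, hupz, inv_pow, ← pow_mul, mul_comm, pow_mul, hzp, one_pow, inv_one]
  have hkill : ∀ g : G, (μ g) ^ (p ^ 2) = 1 := by
    intro g
    show (u ^ A g * z ^ ((A g).choose 2)) ^ (p ^ 2) = 1
    have hc : Commute (u ^ A g) (z ^ ((A g).choose 2)) := hcz (u ^ A g) _
    rw [hc.mul_pow]
    have e1 : (u ^ A g) ^ (p ^ 2) = 1 := by
      rw [← pow_mul, mul_comm, pow_mul, hupsq, one_pow]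
    have e2 : (z ^ ((A g).choose 2)) ^ (p ^ 2) = 1 := by
      rw [← pow_mul]
      rw [show (A g).choose 2 * p ^ 2 = p * ((A g).choose 2 * p) from by ring]
      rw [pow_mul, hzp, one_pow]
    rw [e1, e2, mul_one]
  obtain ⟨α, happ⟩ := exists_aut_of_mu μ hmul hker
  have hAzero : ∀ g : G, u ^ A g ∈ center G → A g = 0 := by
    intro g hmem
    by_contra hne
    apply hu
    have ha : A g < p := hA1 g
    have hndvd : ¬ p ∣ A g := by
      intro hdvd
      have := Nat.le_of_dvd (Nat.pos_of_ne_zero hne) hdvd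
      omega
    have hcop : IsCoprime ((A g : ℤ)) ((p : ℤ)) := by
      rw [Int.isCoprime_iff_gcd_eq_one, Int.gcd_natCast_natCast]
      exact (Nat.coprime_comm.mp (hp.coprime_iff_not_dvd.mpr hndvd))
    obtain ⟨x, y, hxy⟩ := hcop
    have hre : u = (u ^ (A g : ℤ)) ^ x * (u ^ (p : ℤ)) ^ y := by
      rw [← zpow_mul, ← zpow_mul, ← zpow_add,
        show (A g : ℤ) * x + (p : ℤ) * y = 1 from by linarith [hxy], zpow_one]
    rw [hre]
    have hm1 : u ^ (A g : ℤ) ∈ center G := by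
      rw [zpow_natCast]; exact hmem
    have hm2 : u ^ (p : ℤ) ∈ center G := by
      rw [zpow_natCast, hupz]
      exact inv_mem (pow_mem hzc _)
    exact mul_mem (zpow_mem hm1 x) (zpow_mem hm2 y)
  refine ⟨α, ?_, ?_⟩
  · apply DFunLike.ext
    intro g
    rw [aut_pow_apply happ hfix (p ^ 2) g, hkill g, mul_one]
    rfl
  · intro t hteq
    have htnc : t ∉ center G := by
      intro htc
      have hall : ∀ g : G, A g = 0 := by
        intro g
        have hrel : t * g * t⁻¹ = g * μ g := by
          rw [← happ g, hteq]; rfl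
        have h1 : t * g * t⁻¹ = g := by
          have h2 := Subgroup.mem_center_iff.mp htc g
          calc t * g * t⁻¹ = g * t * t⁻¹ := by rw [← h2]
            _ = g := by group
        have h3 : μ g = 1 := by
          have := h1.symm.trans hrel
          exact (left_eq_mul.mp this)
        have h4 : u ^ A g ∈ center G := by
          have h5 : u ^ A g = (z ^ ((A g).choose 2))⁻¹ :=
            eq_inv_of_mul_eq_one_left h3
          rw [h5]
          exact inv_mem (pow_mem hzc _)
        exact hAzero g h4
      apply hu
      rw [Subgroup.mem_center_iff]
      intro g
      have h6 : dd u g = 1 := by rw [← hA2 g, hall g, pow_zero]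
      exact ((dd_eq_one_iff u g).mp h6).symm
    obtain ⟨c, hc⟩ := hcam t htnc
    have hμc : μ c = z⁻¹ := mu_of_inner happ hteq hzc hc
    have h4 : u ^ A c ∈ center G := by
      have h5 : u ^ A c = z⁻¹ * (z ^ ((A c).choose 2))⁻¹ :=
        eq_mul_inv_of_mul_eq hμc
      rw [h5]
      exact mul_mem (inv_mem hzc) (inv_mem (pow_mem hzc _))
    have hAc0 : A c = 0 := hAzero c h4
    have h7 : μ c = 1 := by
      show u ^ A c * z ^ ((A c).choose 2) = 1
      rw [hAc0]
      norm_num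
    have h8 : z = 1 := by
      have := h7.symm.trans hμc
      rw [← inv_one] at this
      exact inv_injective this.symm
    rw [h8, orderOf_one] at hzo
    exact absurd hzo hp.one_lt.ne

end Tier1

section Tier2

variable [Finite G] {z : G}

lemma tier2mu (hzo : orderOf z = 2) (hzc : z ∈ center G)
    (u v : G) (hu : u ∉ center G) (hv : v ∉ center G) (huv : u * v ∉ center G)
    (hu2 : u ^ 2 = 1) (hv2 : v ^ 2 = 1) (hcm : u * v = v * u)
    (hud : ∀ g : G, dd u g ∈ zpowers z)
    (hvd : ∀ g : G, dd v g ∈ zpowers z)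
    (hcam : ∀ t : G, t ∉ center G → ∃ c : G, c * t * c⁻¹ = t * z) :
    ∃ α : MulAut G, α ^ (2 ^ 2) = 1 ∧ ∀ t : G, α ≠ MulAut.conj t := by
  have hzp : z ^ 2 = 1 := by rw [← hzo]; exact pow_orderOf_eq_one z
  have swap : ∀ (k : ℕ) (x : G), z ^ k * x = x * z ^ k :=
    fun k x => (Subgroup.mem_center_iff.mp (pow_mem hzc k) x).symm
  have hcuv : ∀ m n : ℕ, Commute (u ^ m) (v ^ n) :=
    fun m n => (show Commute u v from hcm).pow_pow m n
  have hczx : ∀ (x : G) (k : ℕ), Commute x (z ^ k) :=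
    fun x k => (show Commute x z from Subgroup.mem_center_iff.mp hzc x).pow_right k
  have huddc : ∀ g : G, dd u g ∈ center G := fun g => (zpowers_le.mpr hzc) (hud g)
  have hvddc : ∀ g : G, dd v g ∈ center G := fun g => (zpowers_le.mpr hzc) (hvd g)
  have hdlu : ∀ g : G, ∃ k, k < 2 ∧ z ^ k = dd u g := by
    intro g
    have h := exists_pow_eq (z := z) (x := dd u g) (by rw [hzo]; omega) (hud g)
    rwa [hzo] at h
  have hdlv : ∀ g : G, ∃ k, k < 2 ∧ z ^ k = dd v g := by
    intro g
    have h := exists_pow_eq (z := z) (x := dd v g) (by rw [hzo]; omega) (hvd g)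
    rwa [hzo] at h
  choose B hB1 hB2 using hdlu
  choose A hA1 hA2 using hdlv
  have pow2 : ∀ {x : G}, x ^ 2 = 1 → ∀ n : ℕ, x ^ n = x ^ (n % 2) :=
    fun hx n => pow_eq_pow_mod n hx
  have hAmod : ∀ g h : G, A (g * h) = (A g + A h) % 2 := by
    intro g h
    apply pow_inj (z := z) (by rw [hzo]; exact hA1 _)
      (by rw [hzo]; exact Nat.mod_lt _ (by omega))
    rw [hA2, dd_mul_right (hvddc g) h, ← hA2 g, ← hA2 h, ← pow_add]
    exact pow2 hzp _
  have hBmod : ∀ g h : G, B (g * h) = (B g + B h) % 2 := by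
    intro g h
    apply pow_inj (z := z) (by rw [hzo]; exact hB1 _)
      (by rw [hzo]; exact Nat.mod_lt _ (by omega))
    rw [hB2, dd_mul_right (huddc g) h, ← hB2 g, ← hB2 h, ← pow_add]
    exact pow2 hzp _
  set μ : G → G := fun g => u ^ A g * (v ^ B g * z ^ (A g * B g)) with hμ
  have collect : ∀ i j k i' j' k' : ℕ,
      (u ^ i * (v ^ j * z ^ k)) * (u ^ i' * (v ^ j' * z ^ k'))
        = u ^ (i + i') * (v ^ (j + j') * z ^ (k + k')) := by
    intro i j k i' j' k'
    have h1 : Commute (v ^ j * z ^ k) (u ^ i') :=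
      Commute.mul_left ((hcuv i' j).symm) ((hczx (u ^ i') k).symm)
    have h2 : Commute (z ^ k) (v ^ j') := (hczx (v ^ j') k).symm
    calc (u ^ i * (v ^ j * z ^ k)) * (u ^ i' * (v ^ j' * z ^ k'))
        = (u ^ i * u ^ i') * ((v ^ j * z ^ k) * (v ^ j' * z ^ k')) :=
          h1.mul_mul_mul_comm (u ^ i) (v ^ j' * z ^ k')
      _ = (u ^ i * u ^ i') * ((v ^ j * v ^ j') * (z ^ k * z ^ k')) := by
          rw [h2.mul_mul_mul_comm (v ^ j) (z ^ k')]
      _ = u ^ (i + i') * (v ^ (j + j') * z ^ (k + k')) := by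
          rw [← pow_add, ← pow_add, ← pow_add]
  have conjform : ∀ (i j k : ℕ) (h : G),
      h⁻¹ * (u ^ i * (v ^ j * z ^ k)) * h
        = u ^ i * (v ^ j * z ^ (k + (B h * i + A h * j))) := by
    intro i j k h
    have hsplit : h⁻¹ * (u ^ i * (v ^ j * z ^ k)) * h
        = (h⁻¹ * u ^ i * h) * ((h⁻¹ * v ^ j * h) * (h⁻¹ * z ^ k * h)) := by group
    have hcu : h⁻¹ * u ^ i * h = u ^ i * z ^ (B h * i) := by
      have e2 := map_pow (MulAut.conj h⁻¹) u i
      simp only [MulAut.conj_apply, inv_inv] at e2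
      rw [e2, conj_dd, ← hB2 h, ((hczx u (B h)).symm).mul_pow, ← pow_mul]
      exact swap (B h * i) (u ^ i)
    have hcv : h⁻¹ * v ^ j * h = v ^ j * z ^ (A h * j) := by
      have e2 := map_pow (MulAut.conj h⁻¹) v j
      simp only [MulAut.conj_apply, inv_inv] at e2
      rw [e2, conj_dd, ← hA2 h, ((hczx v (A h)).symm).mul_pow, ← pow_mul]
      exact swap (A h * j) (v ^ j)
    rw [hsplit, center_conj_eq (pow_mem hzc k) h, hcu, hcv]
    calc (u ^ i * z ^ (B h * i)) * ((v ^ j * z ^ (A h * j)) * z ^ k)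
        = u ^ i * (z ^ (B h * i) * (v ^ j * (z ^ (A h * j) * z ^ k))) := by group
      _ = u ^ i * ((v ^ j * (z ^ (A h * j) * z ^ k)) * z ^ (B h * i)) := by
          rw [swap (B h * i)]
      _ = u ^ i * (v ^ j * (z ^ (A h * j) * z ^ k * z ^ (B h * i))) := by group
      _ = u ^ i * (v ^ j * z ^ (k + (B h * i + A h * j))) := by
          rw [← pow_add, ← pow_add]
          congr 2
          ring
  have hmul : ∀ g h : G, μ (g * h) = (h⁻¹ * μ g * h) * μ h := by
    intro g h
    have rhs : (h⁻¹ * μ g * h) * μ h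
        = u ^ (A g + A h)
          * (v ^ (B g + B h)
            * z ^ ((A g * B g + (B h * A g + A h * B g)) + A h * B h)) := by
      show (h⁻¹ * (u ^ A g * (v ^ B g * z ^ (A g * B g))) * h)
          * (u ^ A h * (v ^ B h * z ^ (A h * B h))) = _
      rw [conjform, collect]
    rw [rhs]
    show u ^ A (g * h) * (v ^ B (g * h) * z ^ (A (g * h) * B (g * h))) = _
    rw [hAmod g h, hBmod g h]
    rw [← pow2 hu2 (A g + A h), ← pow2 hv2 (B g + B h)]
    congr 2
    rw [pow2 hzp (((A g + A h) % 2) * ((B g + B h) % 2)), ← Nat.mul_mod,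
      ← pow2 hzp ((A g + A h) * (B g + B h))]
    congr 1
    ring
  have hcomm_mu_u : ∀ g : G, Commute u (μ g) := by
    intro g
    exact Commute.mul_right ((Commute.refl u).pow_right (A g))
      (Commute.mul_right ((show Commute u v from hcm).pow_right (B g)) (hczx u _))
  have hcomm_mu_v : ∀ g : G, Commute v (μ g) := by
    intro g
    exact Commute.mul_right (((show Commute u v from hcm).symm).pow_right (A g))
      (Commute.mul_right ((Commute.refl v).pow_right (B g)) (hczx v _))
  have hABzero : ∀ g : G, A g = 0 → B g = 0 → μ g = 1 := by
    intro g hA0 hB0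
    show u ^ A g * (v ^ B g * z ^ (A g * B g)) = 1
    rw [hA0, hB0]
    norm_num
  have hker : ∀ g : G, g * μ g = 1 → g = 1 := by
    intro g hg
    have hgeq : g = (μ g)⁻¹ := eq_inv_of_mul_eq_one_left hg
    have hcommu : u * g = g * u := by
      rw [hgeq]; exact ((hcomm_mu_u g).inv_right).eq
    have hcommv : v * g = g * v := by
      rw [hgeq]; exact ((hcomm_mu_v g).inv_right).eq
    have hB0 : B g = 0 := by
      apply pow_inj (z := z) (by rw [hzo]; exact hB1 g) (by rw [hzo]; omega)
      rw [hB2, (dd_eq_one_iff u g).mpr hcommu, pow_zero]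
    have hA0 : A g = 0 := by
      apply pow_inj (z := z) (by rw [hzo]; exact hA1 g) (by rw [hzo]; omega)
      rw [hA2, (dd_eq_one_iff v g).mpr hcommv, pow_zero]
    rw [hgeq, hABzero g hA0 hB0, inv_one]
  have hfix : ∀ g : G, μ (g * μ g) = μ g := by
    intro g
    have hdduμ : dd u (μ g) = 1 := (dd_eq_one_iff u (μ g)).mpr (hcomm_mu_u g).eq
    have hddvμ : dd v (μ g) = 1 := (dd_eq_one_iff v (μ g)).mpr (hcomm_mu_v g).eq
    have hAfix : A (g * μ g) = A g := by
      apply pow_inj (z := z) (by rw [hzo]; exact hA1 _) (by rw [hzo]; exact hA1 g)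
      rw [hA2, dd_mul_right (hvddc g) (μ g), hddvμ, mul_one, hA2]
    have hBfix : B (g * μ g) = B g := by
      apply pow_inj (z := z) (by rw [hzo]; exact hB1 _) (by rw [hzo]; exact hB1 g)
      rw [hB2, dd_mul_right (huddc g) (μ g), hdduμ, mul_one, hB2]
    show u ^ A (g * μ g) * (v ^ B (g * μ g) * z ^ (A (g * μ g) * B (g * μ g))) = _
    rw [hAfix, hBfix]
  have hkill : ∀ g : G, (μ g) ^ (2 ^ 2) = 1 := by
    intro g
    have hsq : (μ g) * (μ g) = 1 := by
      show (u ^ A g * (v ^ B g * z ^ (A g * B g)))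
          * (u ^ A g * (v ^ B g * z ^ (A g * B g))) = 1
      rw [collect]
      have e1 : u ^ (A g + A g) = 1 := by
        rw [show A g + A g = 2 * A g from by ring, pow_mul, hu2, one_pow]
      have e2 : v ^ (B g + B g) = 1 := by
        rw [show B g + B g = 2 * B g from by ring, pow_mul, hv2, one_pow]
      have e3 : z ^ (A g * B g + A g * B g) = 1 := by
        rw [show A g * B g + A g * B g = 2 * (A g * B g) from by ring, pow_mul,
          hzp, one_pow]
      rw [e1, e2, e3, one_mul, one_mul]
    have : (μ g) ^ 2 = 1 := by rw [pow_two, hsq]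
    rw [show (2 : ℕ) ^ 2 = 2 * 2 from rfl, pow_mul, this, one_pow]
  obtain ⟨α, happ⟩ := exists_aut_of_mu μ hmul hker
  have habval : ∀ g : G, (A g = 0 ∨ A g = 1) ∧ (B g = 0 ∨ B g = 1) := by
    intro g
    have := hA1 g
    have := hB1 g
    omega
  have hμone : ∀ g : G, μ g = 1 → A g = 0 ∧ B g = 0 := by
    intro g h1
    have h1' : u ^ A g * (v ^ B g * z ^ (A g * B g)) = 1 := h1
    obtain ⟨ha | ha, hb | hb⟩ := habval g
    · exact ⟨ha, hb⟩
    · exfalso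
      rw [ha, hb] at h1'
      simp only [pow_zero, pow_one, one_mul, mul_one, Nat.zero_mul] at h1'
      apply hv
      rw [h1']
      exact (Subgroup.center G).one_mem
    · exfalso
      rw [ha, hb] at h1'
      simp only [pow_zero, pow_one, one_mul, mul_one, Nat.mul_zero] at h1'
      apply hu
      rw [h1']
      exact (Subgroup.center G).one_mem
    · exfalso
      rw [ha, hb] at h1'
      simp only [pow_one, Nat.mul_one, mul_one] at h1'
      apply huv
      have h2 : (u * v) * z = 1 := by rw [mul_assoc]; exact h1'
      have h3 : u * v = z⁻¹ := eq_inv_of_mul_eq_one_left h2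
      rw [h3]
      exact inv_mem hzc
  refine ⟨α, ?_, ?_⟩
  · apply DFunLike.ext
    intro g
    rw [aut_pow_apply happ hfix (2 ^ 2) g, hkill g, mul_one]
    rfl
  · intro t hteq
    have htnc : t ∉ center G := by
      intro htc
      have hall : ∀ g : G, μ g = 1 := by
        intro g
        have hrel : t * g * t⁻¹ = g * μ g := by
          rw [← happ g, hteq]; rfl
        have h1 : t * g * t⁻¹ = g := by
          have h2 := Subgroup.mem_center_iff.mp htc g
          calc t * g * t⁻¹ = g * t * t⁻¹ := by rw [← h2]
            _ = g := by group
        exact left_eq_mul.mp (h1.symm.trans hrel)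
      apply hu
      rw [Subgroup.mem_center_iff]
      intro g
      have h6 : dd u g = 1 := by
        rw [← hB2 g, (hμone g (hall g)).2, pow_zero]
      exact ((dd_eq_one_iff u g).mp h6).symm
    obtain ⟨c, hc⟩ := hcam t htnc
    have hμc : μ c = z⁻¹ := mu_of_inner happ hteq hzc hc
    have hμc' : u ^ A c * (v ^ B c * z ^ (A c * B c)) = z⁻¹ := hμc
    have hz1 : z ≠ 1 := by
      intro h
      rw [h, orderOf_one] at hzo
      omega
    obtain ⟨ha | ha, hb | hb⟩ := habval c
    · rw [ha, hb] at hμc'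
      simp only [pow_zero, mul_one, one_mul, Nat.mul_zero] at hμc'
      exact hz1 (by rw [← inv_inv z, ← hμc', inv_one])
    · rw [ha, hb] at hμc'
      simp only [pow_zero, pow_one, one_mul, mul_one, Nat.zero_mul] at hμc'
      exact hv (by rw [hμc']; exact inv_mem hzc)
    · rw [ha, hb] at hμc'
      simp only [pow_zero, pow_one, one_mul, mul_one, Nat.mul_zero] at hμc'
      exact hu (by rw [hμc']; exact inv_mem hzc)
    · rw [ha, hb] at hμc'
      simp only [pow_one, Nat.mul_one, mul_one] at hμc'
      have h2 : (u * v) * z = z⁻¹ := by rw [mul_assoc]; exact hμc'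
      have h3 : u * v = z⁻¹ * z⁻¹ := eq_mul_inv_of_mul_eq h2
      exact huv (by rw [h3]; exact mul_mem (inv_mem hzc) (inv_mem hzc))

end Tier2

section TierC

variable [Finite G] {p : ℕ} [Fact p.Prime] {z : G}

lemma tierC (hzo : orderOf z = p) (hzc : z ∈ center G)
    (f : G →* G) (M : Subgroup G)
    (hfz : ∀ g : G, f g ∈ zpowers z)
    (hfM : ∀ g : G, f g = 1 ↔ g ∈ M)
    (hzM : z ∈ M)
    (hnt : ∃ g : G, f g ≠ 1)
    (Cstar : Subgroup G) (hMC : M ≠ Cstar)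
    (hres : ∀ t : G, t ∉ center G → (∀ g : G, dd t g ∈ center G) →
      Subgroup.centralizer {t} = Cstar) :
    ∃ α : MulAut G, α ^ (p ^ 2) = 1 ∧ ∀ t : G, α ≠ MulAut.conj t := by
  have hzp : z ^ p = 1 := by rw [← hzo]; exact pow_orderOf_eq_one z
  have hfc : ∀ g : G, f g ∈ center G := fun g => (zpowers_le.mpr hzc) (hfz g)
  have hfzero : ∀ x : G, x ∈ zpowers z → f x = 1 := by
    intro x hx
    exact (hfM x).mpr ((zpowers_le.mpr hzM) hx)
  set μ : G → G := fun g => f g with hμ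
  have hmul : ∀ g h : G, μ (g * h) = (h⁻¹ * μ g * h) * μ h := by
    intro g h
    show f (g * h) = (h⁻¹ * f g * h) * f h
    rw [map_mul, center_conj_eq (hfc g) h]
  have hker : ∀ g : G, g * μ g = 1 → g = 1 := by
    intro g hg
    have hgeq : g = (f g)⁻¹ := eq_inv_of_mul_eq_one_left hg
    have hgz : g ∈ zpowers z := by rw [hgeq]; exact inv_mem (hfz g)
    have h1 : f g = 1 := hfzero g hgz
    rw [hgeq, h1, inv_one]
  have hfix : ∀ g : G, μ (g * μ g) = μ g := by
    intro g
    show f (g * f g) = f g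
    rw [map_mul, hfzero (f g) (hfz g), mul_one]
  have hkill : ∀ g : G, (μ g) ^ (p ^ 2) = 1 := by
    intro g
    have h1 : (f g) ^ p = 1 := zpowers_pow_eq_one (hfz g) hzp
    show (f g) ^ (p ^ 2) = 1
    rw [pow_two, pow_mul, h1, one_pow]
  obtain ⟨α, happ⟩ := exists_aut_of_mu μ hmul hker
  refine ⟨α, ?_, ?_⟩
  · apply DFunLike.ext
    intro g
    rw [aut_pow_apply happ hfix (p ^ 2) g, hkill g, mul_one]
    rfl
  · intro t hteq
    have hrel : ∀ g : G, t * g * t⁻¹ = g * f g := fun g => by rw [← happ g, hteq]; rfl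
    have hddf : ∀ g : G, dd t g = f g := by
      intro g
      have h1 : g⁻¹ * (t * g * t⁻¹) = f g := by rw [hrel g]; group
      calc dd t g = g⁻¹ * (t * g * t⁻¹) := by unfold dd; group
        _ = f g := h1
    have htnc : t ∉ center G := by
      intro htc
      obtain ⟨g₀, hg₀⟩ := hnt
      apply hg₀
      rw [← hddf g₀]
      exact (dd_eq_one_iff t g₀).mpr ((Subgroup.mem_center_iff.mp htc g₀).symm)
    have hcent : Subgroup.centralizer {t} = Cstar :=
      hres t htnc (fun g => hddf g ▸ hfc g)
    apply hMC
    rw [← hcent]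
    ext g
    rw [← hfM g, ← hddf g, Subgroup.mem_centralizer_singleton_iff]
    rw [dd_eq_one_iff]
    constructor
    · intro h; exact h.symm
    · intro h; exact h.symm

end TierC

section Setup

variable [Finite G] {p : ℕ} [Fact p.Prime] {z : G}

lemma tierC_setup (hp : IsPGroup p G) (hzo : orderOf z = p) (hzc : z ∈ center G)
    (htop : Subgroup.center G ≠ ⊤)
    (hcam : ∀ t : G, t ∉ center G → ∃ c : G, c * t * c⁻¹ = t * z)
    (u₀ : G) (hu₀ : u₀ ∉ center G)
    (hres : ∀ t : G, t ∉ center G → (∀ g : G, dd t g ∈ center G) →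
      Subgroup.centralizer {t} = Subgroup.centralizer {u₀}) :
    ∃ α : MulAut G, α ^ (p ^ 2) = 1 ∧ ∀ t : G, α ≠ MulAut.conj t := by
  have hpp : p.Prime := Fact.out
  haveI : Finite (Subgroup G) :=
    Finite.of_injective ((↑) : Subgroup G → Set G) SetLike.coe_injective
  set Cstar := Subgroup.centralizer {u₀} with hCs
  have hCtop : Cstar ≠ ⊤ := by
    intro h
    apply hu₀
    rw [Subgroup.mem_center_iff]
    intro g
    have h1 : g ∈ Cstar := h ▸ Subgroup.mem_top g
    exact Subgroup.mem_centralizer_singleton_iff.mp h1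
  have hM : ∃ M : Subgroup G, IsCoatom M ∧ M ≠ Cstar := by
    by_contra hno
    push_neg at hno
    have hcyc : ∃ g : G, zpowers g = ⊤ := by
      by_contra hng
      push_neg at hng
      apply hCtop
      rw [eq_top_iff]
      intro g _
      rcases eq_top_or_exists_le_coatom (zpowers g) with h | ⟨M, hM1, hM2⟩
      · exact absurd h (hng g)
      · have h2 := hno M hM1
        exact (h2 ▸ hM2) (Subgroup.mem_zpowers g)
    obtain ⟨g, hg⟩ := hcyc
    apply htop
    rw [eq_top_iff]
    intro x _
    rw [Subgroup.mem_center_iff]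
    intro y
    have hx : x ∈ zpowers g := hg ▸ Subgroup.mem_top x
    have hy : y ∈ zpowers g := hg ▸ Subgroup.mem_top y
    obtain ⟨m, rfl⟩ := hx
    obtain ⟨n, rfl⟩ := hy
    exact ((Commute.refl g).zpow_zpow n m).eq
  obtain ⟨M, hMco, hMC⟩ := hM
  haveI : Group.IsNilpotent G := hp.isNilpotent
  haveI hMnormal : M.Normal :=
    Subgroup.NormalizerCondition.normal_of_coatom M
      (normalizerCondition_of_isNilpotent) hMco
  set π := QuotientGroup.mk' M with hπ
  have hsurj : Function.Surjective π := QuotientGroup.mk'_surjective M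
  have hsubQ : ∀ K : Subgroup (G ⧸ M), K = ⊥ ∨ K = ⊤ := by
    intro K
    set N := K.comap π with hN
    have hMN : M ≤ N := by
      intro m hm
      show π m ∈ K
      rw [show π m = 1 from (QuotientGroup.eq_one_iff m).mpr hm]
      
      exact K.one_mem
    have h2 := Subgroup.map_comap_eq_self_of_surjective hsurj K
    rcases eq_or_ne N ⊤ with hNt | hNn
    · right
      rw [← h2, ← hN, hNt, Subgroup.map_top_of_surjective π hsurj]
    · left
      have hNM : N = M := by
        rcases lt_or_eq_of_le hMN with hlt | heq
        · exact absurd (hMco.2 N hlt) hNn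
        · exact heq.symm
      rw [← h2, ← hN, hNM, eq_bot_iff]
      rintro q ⟨m, hm, rfl⟩
      have : π m = 1 := (QuotientGroup.eq_one_iff m).mpr hm
      rw [this]
      exact Subgroup.one_mem ⊥
  have hQp : IsPGroup p (G ⧸ M) := hp.to_quotient M
  obtain ⟨y₀, hy₀⟩ : ∃ x : G, x ∉ M := by
    by_contra h
    push_neg at h
    exact hMco.1 (eq_top_iff.mpr fun y _ => h y)
  have hmk : ∀ x : G, π x = QuotientGroup.mk x := fun _ => rfl
  have hyne : π y₀ ≠ 1 := by
    rw [hmk, Ne, QuotientGroup.eq_one_iff]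
    exact hy₀
  have hzpb : zpowers (π y₀) = ⊤ := by
    rcases hsubQ (zpowers (π y₀)) with h | h
    · rw [Subgroup.zpowers_eq_bot] at h
      exact absurd h hyne
    · exact h
  have hcardQ : Nat.card (G ⧸ M) = p := by
    obtain ⟨k, hordy⟩ := IsPGroup.iff_orderOf.mp hQp (π y₀)
    have hk0 : k ≠ 0 := by
      rintro rfl
      rw [pow_zero] at hordy
      exact hyne (orderOf_eq_one_iff.mp hordy)
    set w := (π y₀) ^ (p ^ (k - 1)) with hw
    have hwp : w ^ p = 1 := by
      rw [hw, ← pow_mul, ← pow_succ]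
      rw [show k - 1 + 1 = k from by omega, ← hordy]
      exact pow_orderOf_eq_one _
    have hwne : w ≠ 1 := by
      apply pow_ne_one_of_lt_orderOf
      · exact (pow_pos hpp.pos _).ne'
      · rw [hordy]
        exact Nat.pow_lt_pow_right hpp.one_lt (by omega)
    have hzw : zpowers w = ⊤ := by
      rcases hsubQ (zpowers w) with h | h
      · rw [Subgroup.zpowers_eq_bot] at h
        exact absurd h hwne
      · exact h
    have hordw : orderOf w = p := by
      have h1 : orderOf w ∣ p := orderOf_dvd_of_pow_eq_one hwp
      rcases hpp.eq_one_or_self_of_dvd _ h1 with h | h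
      · exact absurd (orderOf_eq_one_iff.mp h) hwne
      · exact h
    calc Nat.card (G ⧸ M) = Nat.card (⊤ : Subgroup (G ⧸ M)) :=
          (Subgroup.card_top).symm
      _ = Nat.card (zpowers w) := by rw [hzw]
      _ = orderOf w := Nat.card_zpowers _
      _ = p := hordw
  have hordy : orderOf (π y₀) = p := by
    have h1 : orderOf (π y₀) ∣ p := hcardQ ▸ orderOf_dvd_natCard (π y₀)
    rcases hpp.eq_one_or_self_of_dvd _ h1 with h | h
    · exact absurd (orderOf_eq_one_iff.mp h) hyne
    · exact h
  have hQcomm : ∀ a b : G ⧸ M, a * b = b * a := by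
    have hcyc : IsCyclic (G ⧸ M) := isCyclic_of_prime_card hcardQ
    obtain ⟨g, hg⟩ := hcyc.exists_generator
    intro a b
    obtain ⟨m, rfl⟩ := hg a
    obtain ⟨n, rfl⟩ := hg b
    exact ((Commute.refl g).zpow_zpow m n).eq
  have hzM : z ∈ M := by
    obtain ⟨x₀, hx₀⟩ : ∃ x : G, x ∉ center G := by
      by_contra h
      push_neg at h
      exact htop (eq_top_iff.mpr fun y _ => h y)
    obtain ⟨c, hc⟩ := hcam x₀ hx₀
    have hzeq : z = x₀⁻¹ * (c * x₀ * c⁻¹) := by rw [hc]; group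
    have h1 : π z = π x₀⁻¹ * (π c * π x₀ * π c⁻¹) := by
      rw [hzeq]
      simp only [map_mul, map_inv]
    have h2 : π z = 1 := by
      rw [h1, map_inv, map_inv]
      rw [hQcomm (π c) (π x₀)]
      group
    rw [hmk] at h2
    exact (QuotientGroup.eq_one_iff z).mp h2
  have hgen : ∀ x : G ⧸ M, x ∈ zpowers (π y₀) := by
    rcases hsubQ (zpowers (π y₀)) with h | h
    · rw [Subgroup.zpowers_eq_bot] at h
      exact absurd h hyne
    · intro x
      rw [h]
      exact Subgroup.mem_top x
  have hdl : ∀ x : G ⧸ M, ∃ k, k < p ∧ (π y₀) ^ k = x := by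
    intro x
    have h := exists_pow_eq (z := π y₀) (x := x) (by rw [hordy]; exact hpp.pos) (hgen x)
    rwa [hordy] at h
  choose Bq hB1 hB2 using hdl
  have hBmod : ∀ a b : G ⧸ M, Bq (a * b) = (Bq a + Bq b) % p := by
    intro a b
    apply pow_inj (z := π y₀) (by rw [hordy]; exact hB1 _)
      (by rw [hordy]; exact Nat.mod_lt _ hpp.pos)
    rw [hB2, show ((Bq a + Bq b) % p) = ((Bq a + Bq b) % orderOf (π y₀)) from by
      rw [hordy], pow_mod_orderOf, pow_add, hB2, hB2]
  have hB1zero : Bq 1 = 0 := by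
    apply pow_inj (z := π y₀) (by rw [hordy]; exact hB1 _) (by rw [hordy]; exact hpp.pos)
    rw [hB2, pow_zero]
  set f : G →* G :=
    { toFun := fun g => z ^ (Bq (π g))
      map_one' := by
        show z ^ (Bq (π 1)) = 1
        rw [show π (1 : G) = 1 from map_one π, hB1zero, pow_zero]
      map_mul' := by
        intro g h
        show z ^ (Bq (π (g * h))) = z ^ (Bq (π g)) * z ^ (Bq (π h))
        rw [map_mul π, hBmod, show ((Bq (π g) + Bq (π h)) % p)
            = ((Bq (π g) + Bq (π h)) % orderOf z) from by rw [hzo],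
          pow_mod_orderOf, pow_add] } with hf
  have hfapp : ∀ g : G, f g = z ^ (Bq (π g)) := fun _ => rfl
  have hiff : ∀ g : G, f g = 1 ↔ g ∈ M := by
    intro g
    rw [hfapp]
    constructor
    · intro h
      have hB0 : Bq (π g) = 0 := by
        apply pow_inj (z := z) (by rw [hzo]; exact hB1 _) (by rw [hzo]; exact hpp.pos)
        rw [h, pow_zero]
      have h2 : π g = 1 := by
        rw [← hB2 (π g), hB0, pow_zero]
      rw [hmk] at h2
      exact (QuotientGroup.eq_one_iff g).mp h2
    · intro h
      have h2 : π g = 1 := by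
        rw [hmk]
        exact (QuotientGroup.eq_one_iff g).mpr h
      rw [h2, hB1zero, pow_zero]
  apply tierC hzo hzc f M ?_ hiff hzM ?_ Cstar hMC hres
  · intro g
    rw [hfapp]
    exact pow_mem (Subgroup.mem_zpowers z) _
  · refine ⟨y₀, ?_⟩
    rw [Ne, hiff]
    exact hy₀

end Setup

section MoreAux

lemma cent_eq_of_mul_center {u t : G} (hc : u * t ∈ center G) :
    Subgroup.centralizer {t} = Subgroup.centralizer {u} := by
  have key : ∀ g : G, g * t = t * g ↔ g * u = u * g := by
    intro g
    have hcg := Subgroup.mem_center_iff.mp hc g  -- g * (u*t) = (u*t) * g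
    constructor
    · intro h
      -- u = (u*t) * t⁻¹
      have h2 : g * u = g * (u * t) * t⁻¹ := by group
      rw [h2, hcg]
      -- (u*t) * g * t⁻¹ = u * g : need g t⁻¹ = t⁻¹ g from h
      have h3 : g * t⁻¹ = t⁻¹ * g := by
        calc g * t⁻¹ = t⁻¹ * (t * g) * t⁻¹ := by group
          _ = t⁻¹ * (g * t) * t⁻¹ := by rw [h]
          _ = t⁻¹ * g := by group
      calc u * t * g * t⁻¹ = u * t * (g * t⁻¹) := by group
        _ = u * t * (t⁻¹ * g) := by rw [h3]
        _ = u * g := by group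
    · intro h
      have h2 : g * t = g * u⁻¹ * (u * t) := by group
      rw [h2]
      have h3 : g * u⁻¹ = u⁻¹ * g := by
        calc g * u⁻¹ = u⁻¹ * (u * g) * u⁻¹ := by group
          _ = u⁻¹ * (g * u) * u⁻¹ := by rw [← h]
          _ = u⁻¹ * g := by group
      rw [h3]
      calc u⁻¹ * g * (u * t) = u⁻¹ * (g * (u * t)) := by group
        _ = u⁻¹ * ((u * t) * g) := by rw [hcg]
        _ = t * g := by group
  ext g
  rw [Subgroup.mem_centralizer_singleton_iff, Subgroup.mem_centralizer_singleton_iff]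
  exact key g

lemma semi_pow {x y c : G} (hc : y * x = x * (y * c))
    (hcy : c * y = y * c) (n : ℕ) :
    y ^ n * x = x * (y ^ n * c ^ n) := by
  induction n with
  | zero => simp
  | succ n ih =>
      have hcyn : c * y ^ n = y ^ n * c := ((show Commute y c from hcy.symm).symm.pow_right n).eq
      calc y ^ (n + 1) * x = y * (y ^ n * x) := by rw [pow_succ']; group
        _ = y * (x * (y ^ n * c ^ n)) := by rw [ih]
        _ = (y * x) * (y ^ n * c ^ n) := by group
        _ = (x * (y * c)) * (y ^ n * c ^ n) := by rw [hc]
        _ = x * (y * (c * y ^ n) * c ^ n) := by group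
        _ = x * (y * (y ^ n * c) * c ^ n) := by rw [hcyn]
        _ = x * (y ^ (n + 1) * c ^ (n + 1)) := by
            rw [pow_succ' y, pow_succ' c]
            group

lemma expand_pow {x y c : G} (hc : y * x = x * (y * c))
    (hcx : c * x = x * c) (hcy : c * y = y * c) (n : ℕ) :
    (x * y) ^ n = x ^ n * y ^ n * c ^ (n.choose 2) := by
  induction n with
  | zero => simp
  | succ n ih =>
      have hcomc : ∀ m k : ℕ, c ^ m * y ^ k = y ^ k * c ^ m :=
        fun m k => (((show Commute y c from hcy.symm).symm).pow_pow m k).eq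
      have hcomc1 : ∀ m : ℕ, c ^ m * y = y * c ^ m :=
        fun m => ((show Commute c y from hcy).pow_left m).eq
      have hcomx : ∀ m : ℕ, c ^ m * x = x * c ^ m :=
        fun m => (((show Commute c x from hcx)).pow_left m).eq
      have hsemi := semi_pow hc hcy n
      have hch : (n + 1).choose 2 = n.choose 2 + n := by
        rw [Nat.choose_succ_succ]
        simp [Nat.choose_one_right]
        ring
      calc (x * y) ^ (n + 1) = (x * y) ^ n * (x * y) := by rw [pow_succ]
        _ = x ^ n * y ^ n * c ^ (n.choose 2) * (x * y) := by rw [ih]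
        _ = x ^ n * (y ^ n * (c ^ (n.choose 2) * x)) * y := by group
        _ = x ^ n * (y ^ n * (x * c ^ (n.choose 2))) * y := by rw [hcomx]
        _ = x ^ n * (y ^ n * x) * (c ^ (n.choose 2) * y) := by group
        _ = x ^ n * (x * (y ^ n * c ^ n)) * (y * c ^ (n.choose 2)) := by
            rw [hsemi, hcomc1 (n.choose 2)]
        _ = x ^ (n + 1) * (y ^ n * (c ^ n * y)) * c ^ (n.choose 2) := by
            rw [pow_succ x]
            group
        _ = x ^ (n + 1) * (y ^ n * (y * c ^ n)) * c ^ (n.choose 2) := by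
            rw [hcomc1 n]
        _ = x ^ (n + 1) * y ^ (n + 1) * (c ^ n * c ^ (n.choose 2)) := by
            rw [pow_succ y]
            group
        _ = x ^ (n + 1) * y ^ (n + 1) * c ^ ((n + 1).choose 2) := by
            rw [← pow_add, hch]
            congr 1
            ring

lemma commute_of_commute_pow {t g : G} {i N : ℕ} (hN : t ^ N = 1)
    (hcop : Nat.Coprime i N) (hN1 : 1 < N)
    (h : g * t ^ i = t ^ i * g) : g * t = t * g := by
  obtain ⟨m, -, hm⟩ := Nat.exists_mul_mod_eq_one_of_coprime hcop hN1
  have hcom : Commute g (t ^ i) := h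
  have hcom2 := hcom.pow_right m
  rw [← pow_mul] at hcom2
  rw [pow_eq_pow_mod (i * m) hN, hm, pow_one] at hcom2
  exact hcom2

end MoreAux

end CaminaAux

open CaminaAux Subgroup in
/-- If `G` is a finite `p`-group with `|Z(G)| = p` such that `(G, Z(G))` is a Camina
pair, then `|G|` divides `|Aut G|`. -/
theorem card_dvd_card_mulAut_of_center_prime {p : ℕ} [Fact p.Prime] {G : Type*} [Group G]
    [Finite G] (hp : IsPGroup p G) (hZ : Nat.card (Subgroup.center G) = p)
    (hC : IsCaminaPairCenter G) :
    Nat.card G ∣ Nat.card (MulAut G) := by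
  classical
  obtain ⟨hbot, htop, hcamina⟩ := hC
  have hpp : p.Prime := Fact.out
  have hnt : Nontrivial (Subgroup.center G) := by
    apply Finite.one_lt_card_iff_nontrivial.mp
    rw [hZ]
    exact hpp.one_lt
  obtain ⟨w, hw⟩ := exists_ne (1 : Subgroup.center G)
  set z : G := (w : G) with hzdef
  have hzc : z ∈ Subgroup.center G := w.2
  have hzo : orderOf z = p := by
    have h2 : orderOf z = orderOf w :=
      orderOf_injective (Subgroup.center G).subtype (Subgroup.subtype_injective _) w
    have h1 : orderOf w ∣ p := by rw [← hZ]; exact orderOf_dvd_natCard w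
    rw [h2]
    rcases hpp.eq_one_or_self_of_dvd _ h1 with h | h
    · exact absurd (orderOf_eq_one_iff.mp h) hw
    · exact h
  have hzp1 : z ^ p = 1 := by rw [← hzo]; exact pow_orderOf_eq_one z
  have hcenz : Subgroup.center G = Subgroup.zpowers z := by
    have hle : Subgroup.zpowers z ≤ Subgroup.center G := Subgroup.zpowers_le.mpr hzc
    have hcard : Nat.card (Subgroup.center G) ≤ Nat.card (Subgroup.zpowers z) := by
      rw [Nat.card_zpowers, hzo, hZ]
    exact (Subgroup.eq_of_le_of_card_ge hle hcard).symm
  have hcam : ∀ t : G, t ∉ Subgroup.center G → ∃ c : G, c * t * c⁻¹ = t * z :=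
    fun t ht => isConj_iff.mp (hcamina t ht z hzc)
  -- u₀ : an element of Z₂ \ Z
  obtain ⟨u₀, hu₀nc, hu₀d⟩ : ∃ u : G, u ∉ Subgroup.center G ∧
      ∀ g : G, dd u g ∈ Subgroup.center G := by
    haveI : Nontrivial (G ⧸ Subgroup.center G) := by
      obtain ⟨x, hx⟩ : ∃ x : G, x ∉ Subgroup.center G := by
        by_contra h
        push_neg at h
        exact htop (eq_top_iff.mpr fun y _ => h y)
      exact ⟨⟨QuotientGroup.mk x, 1, by
        rw [Ne, QuotientGroup.eq_one_iff]
        exact hx⟩⟩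
    have hQp : IsPGroup p (G ⧸ Subgroup.center G) := hp.to_quotient _
    haveI := IsPGroup.center_nontrivial hQp
    obtain ⟨cbar, hcbar⟩ := exists_ne (1 : Subgroup.center (G ⧸ Subgroup.center G))
    obtain ⟨u, hu⟩ := QuotientGroup.mk_surjective (cbar : G ⧸ Subgroup.center G)
    refine ⟨u, ?_, ?_⟩
    · intro hc
      apply hcbar
      have h1 : (cbar : G ⧸ Subgroup.center G) = 1 := by
        rw [← hu, QuotientGroup.eq_one_iff]
        exact hc
      exact Subtype.ext h1
    · intro g
      have h1 : (QuotientGroup.mk (dd u g) : G ⧸ Subgroup.center G) = 1 := by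
        have h2 : (QuotientGroup.mk (dd u g) : G ⧸ Subgroup.center G)
            = dd (QuotientGroup.mk u) (QuotientGroup.mk g) := by
          unfold dd
          rfl
        rw [h2, hu]
        apply (dd_eq_one_iff _ _).mpr
        exact (Subgroup.mem_center_iff.mp cbar.2 (QuotientGroup.mk g)).symm
      exact (QuotientGroup.eq_one_iff _).mp h1
  by_cases hA : ∃ u : G, u ∉ Subgroup.center G ∧ (∀ g : G, dd u g ∈ Subgroup.center G) ∧
      u ^ p * z ^ (p.choose 2) = 1
  · obtain ⟨u, hu1, hu2, hu3⟩ := hA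
    exact card_dvd_of_exists_noninner hZ
      (tier1 hzo hzc u hu1 (fun g => hcenz ▸ hu2 g) hu3 hcam)
  · push_neg at hA
    rcases hpp.eq_two_or_odd' with hp2 | hodd
    · -- p = 2
      subst hp2
      have hz2 : z ^ 2 = 1 := hzp1
      have hsq : ∀ u : G, u ∉ Subgroup.center G →
          (∀ g : G, dd u g ∈ Subgroup.center G) → u ^ 2 = 1 := by
        intro u hu hud
        have hu2c : u ^ 2 ∈ Subgroup.center G := by
          rw [Subgroup.mem_center_iff]
          intro g
          have hdd : dd (u ^ 2) g = 1 := by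
            rw [dd_pow_left (hud g) 2]
            exact zpowers_pow_eq_one (hcenz ▸ hud g) hz2
          exact ((dd_eq_one_iff _ _).mp hdd).symm
        have h3 := exists_pow_eq (z := z) (x := u ^ 2) (by rw [hzo]; omega)
          (hcenz ▸ hu2c)
        rw [hzo] at h3
        obtain ⟨k, hk, hk2⟩ := h3
        have hk01 : k = 0 ∨ k = 1 := by omega
        rcases hk01 with rfl | rfl
        · rw [← hk2, pow_zero]
        · exfalso
          apply hA u hu hud
          rw [← hk2, pow_one, show Nat.choose 2 2 = 1 from rfl, pow_one, ← pow_two]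
          exact hz2
      have hu₀2 : u₀ ^ 2 = 1 := hsq u₀ hu₀nc hu₀d
      by_cases hB : ∃ v : G, v ∉ Subgroup.center G ∧
          (∀ g : G, dd v g ∈ Subgroup.center G) ∧ u₀ * v ∉ Subgroup.center G
      · obtain ⟨v, hv1, hv2, hv3⟩ := hB
        have hv2' : v ^ 2 = 1 := hsq v hv1 hv2
        have hddc : dd v u₀ ∈ Subgroup.center G := hv2 u₀
        have h3 := exists_pow_eq (z := z) (x := dd v u₀) (by rw [hzo]; omega)
          (hcenz ▸ hddc)
        rw [hzo] at h3
        obtain ⟨k, hk, hk2⟩ := h3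
        have hk01 : k = 0 ∨ k = 1 := by omega
        rcases hk01 with rfl | rfl
        · have hcm : u₀ * v = v * u₀ := by
            have h4 : dd v u₀ = 1 := by rw [← hk2, pow_zero]
            exact ((dd_eq_one_iff v u₀).mp h4).symm
          exact card_dvd_of_exists_noninner hZ
            (tier2mu hzo hzc u₀ v hu₀nc hv1 hv3 hu₀2 hv2' hcm
              (fun g => hcenz ▸ hu₀d g) (fun g => hcenz ▸ hv2 g) hcam)
        · exfalso
          have hz' : dd v u₀ = z := by rw [← hk2, pow_one]
          have h5 : u₀⁻¹ * v * u₀ = z * v := by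
            calc u₀⁻¹ * v * u₀ = (u₀⁻¹ * v * u₀ * v⁻¹) * v := by group
              _ = z * v := by rw [show u₀⁻¹ * v * u₀ * v⁻¹ = dd v u₀ from rfl, hz']
          have h4 : v * u₀ = u₀ * (z * v) := by
            calc v * u₀ = u₀ * (u₀⁻¹ * v * u₀) := by group
              _ = u₀ * (z * v) := by rw [h5]
          have hw2 : (u₀ * v) ^ 2 = z := by
            have hzcm : ∀ x : G, x * z = z * x :=
              fun x => Subgroup.mem_center_iff.mp hzc x
            calc (u₀ * v) ^ 2 = u₀ * (v * u₀) * v := by rw [pow_two]; group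
              _ = u₀ * (u₀ * (z * v)) * v := by rw [h4]
              _ = (u₀ * u₀) * (z * (v * v)) := by group
              _ = (u₀ * u₀) * ((v * v) * z) := by rw [← hzcm (v * v)]
              _ = z := by
                  rw [show u₀ * u₀ = u₀ ^ 2 from (pow_two u₀).symm, hu₀2,
                    show v * v = v ^ 2 from (pow_two v).symm, hv2']
                  group
          apply hA (u₀ * v) hv3 ?_ ?_
          · intro g
            rw [dd_mul_left (hv2 g) u₀]
            exact mul_mem (hu₀d g) (hv2 g)
          · rw [hw2, show Nat.choose 2 2 = 1 from rfl, pow_one, ← pow_two]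
            exact hz2
      · push_neg at hB
        apply card_dvd_of_exists_noninner hZ
        apply tierC_setup hp hzo hzc htop hcam u₀ hu₀nc
        intro t ht htd
        exact cent_eq_of_mul_center (hB t ht htd)
    · -- p odd
      have hCp : z ^ (p.choose 2) = 1 := by
        have h2 : 2 ∣ p - 1 := by
          obtain ⟨m, hm⟩ := hodd
          omega
        obtain ⟨m, hm⟩ := h2
        have h3 : p.choose 2 = p * m := by
          rw [Nat.choose_two_right, hm,
            show p * (2 * m) = (p * m) * 2 from by ring,
            Nat.mul_div_cancel _ (by omega)]
        rw [h3, pow_mul, hzp1, one_pow]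
      have hres0 : ∀ u : G, u ∉ Subgroup.center G →
          (∀ g : G, dd u g ∈ Subgroup.center G) → u ^ p ≠ 1 := by
        intro u h1 h2 h3
        exact hA u h1 h2 (by rw [h3, one_mul, hCp])
      have hZ2p : ∀ t : G, (∀ g : G, dd t g ∈ Subgroup.center G) →
          t ^ p ∈ Subgroup.center G := by
        intro t htd
        rw [Subgroup.mem_center_iff]
        intro g
        have hdd : dd (t ^ p) g = 1 := by
          rw [dd_pow_left (htd g) p]
          exact zpowers_pow_eq_one (hcenz ▸ htd g) hzp1
        exact ((dd_eq_one_iff _ _).mp hdd).symm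
      apply card_dvd_of_exists_noninner hZ
      apply tierC_setup hp hzo hzc htop hcam u₀ hu₀nc
      intro s hs1 hs2
      -- main: centralizer {s} = centralizer {u₀}
      -- dlog of u₀^p and s^p
      have hup := hZ2p u₀ hu₀d
      have hsp := hZ2p s hs2
      obtain ⟨a, ha1, ha2⟩ : ∃ k, k < p ∧ z ^ k = u₀ ^ p := by
        have h := exists_pow_eq (z := z) (x := u₀ ^ p) (by rw [hzo]; exact hpp.pos)
          (hcenz ▸ hup)
        rwa [hzo] at h
      obtain ⟨b, hb1, hb2⟩ : ∃ k, k < p ∧ z ^ k = s ^ p := by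
        have h := exists_pow_eq (z := z) (x := s ^ p) (by rw [hzo]; exact hpp.pos)
          (hcenz ▸ hsp)
        rwa [hzo] at h
      have ha0 : a ≠ 0 := by
        intro h
        apply hres0 u₀ hu₀nc hu₀d
        rw [← ha2, h, pow_zero]
      have hb0 : b ≠ 0 := by
        intro h
        apply hres0 s hs1 hs2
        rw [← hb2, h, pow_zero]
      haveI : NeZero p := ⟨hpp.pos.ne'⟩
      set i : ℕ := (((p - b : ℕ) : ZMod p) * (a : ZMod p)⁻¹).val with hi
      have hane : (a : ZMod p) ≠ 0 := by
        intro h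
        rw [ZMod.natCast_eq_zero_iff] at h
        have := Nat.le_of_dvd (Nat.pos_of_ne_zero ha0) h
        omega
      have hbne : ((p - b : ℕ) : ZMod p) ≠ 0 := by
        intro h
        rw [ZMod.natCast_eq_zero_iff] at h
        have := Nat.le_of_dvd (by omega) h
        omega
      have hine : (((p - b : ℕ) : ZMod p) * (a : ZMod p)⁻¹) ≠ 0 := by
        apply mul_ne_zero hbne
        exact inv_ne_zero hane
      have hi0 : i ≠ 0 := by
        rw [hi, Ne, ZMod.val_eq_zero]
        exact hine
      have hilt : i < p := by
        rw [hi]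
        exact ZMod.val_lt _
      have hdvd : p ∣ a * i + b := by
        have h1 : ((a * i + b : ℕ) : ZMod p) = 0 := by
          push_cast
          rw [hi, ZMod.natCast_val, ZMod.cast_id]
          rw [show ((a : ZMod p) * (((p - b : ℕ) : ZMod p) * (a : ZMod p)⁻¹))
              = (((p - b : ℕ) : ZMod p)) * ((a : ZMod p) * (a : ZMod p)⁻¹) from by ring]
          rw [mul_inv_cancel₀ hane, mul_one]
          rw [Nat.cast_sub hb1.le, ZMod.natCast_self, zero_sub]
          exact neg_add_cancel _
        exact (ZMod.natCast_eq_zero_iff _ _).mp h1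
      have hzai : z ^ (a * i + b) = 1 := by
        obtain ⟨m, hm⟩ := hdvd
        rw [hm, pow_mul, hzp1, one_pow]
      have hu₀iZ2 : ∀ g : G, dd (u₀ ^ i) g ∈ Subgroup.center G := by
        intro g
        rw [dd_pow_left (hu₀d g) i]
        exact pow_mem (hu₀d g) i
      set wel : G := u₀ ^ i * s with hwel
      have hwZ2 : ∀ g : G, dd wel g ∈ Subgroup.center G := by
        intro g
        rw [hwel, dd_mul_left (hs2 g) (u₀ ^ i)]
        exact mul_mem (hu₀iZ2 g) (hs2 g)
      set cc : G := s⁻¹ * (u₀ ^ i)⁻¹ * s * (u₀ ^ i) with hccdef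
      have hcdef : s * (u₀ ^ i) = (u₀ ^ i) * (s * cc) := by
        rw [hccdef]; group
      have hcc : cc ∈ Subgroup.center G := by
        have h7 : cc = dd ((u₀ ^ i)⁻¹) s := by
          unfold dd
          rw [hccdef]
          group
        rw [h7, dd_inv_left (hu₀iZ2 s)]
        exact inv_mem (hu₀iZ2 s)
      have hwp : wel ^ p = 1 := by
        have hcx : cc * (u₀ ^ i) = (u₀ ^ i) * cc :=
          (Subgroup.mem_center_iff.mp hcc (u₀ ^ i)).symm
        have hcy : cc * s = s * cc := (Subgroup.mem_center_iff.mp hcc s).symm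
        have hexp := expand_pow hcdef hcx hcy p
        rw [hwel, hexp]
        have e1 : (u₀ ^ i) ^ p = z ^ (a * i) := by
          rw [← pow_mul, mul_comm i p, pow_mul, ← ha2, ← pow_mul]
        have e2 : cc ^ (p.choose 2) = 1 := zpowers_pow_eq_one (hcenz ▸ hcc) hCp
        rw [e1, ← hb2, e2, mul_one, ← pow_add, hzai]
      have hwc : wel ∈ Subgroup.center G := by
        by_contra hwnc
        exact hres0 wel hwnc hwZ2 hwp
      have hstep1 : Subgroup.centralizer {s} = Subgroup.centralizer {u₀ ^ i} :=
        cent_eq_of_mul_center hwc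
      have hstep2 : Subgroup.centralizer {u₀ ^ i} = Subgroup.centralizer {u₀} := by
        ext g
        rw [Subgroup.mem_centralizer_singleton_iff,
          Subgroup.mem_centralizer_singleton_iff]
        constructor
        · intro h
          have hN : u₀ ^ (p ^ 2) = 1 := by
            rw [pow_two, pow_mul, ← ha2, ← pow_mul, mul_comm, pow_mul, hzp1, one_pow]
          have hndvd : ¬ p ∣ i := by
            intro hd
            have := Nat.le_of_dvd (Nat.pos_of_ne_zero hi0) hd
            omega
          have hcop : Nat.Coprime i (p ^ 2) :=
            Nat.Coprime.pow_right 2 (Nat.coprime_comm.mp (hpp.coprime_iff_not_dvd.mpr hndvd))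
          have hgt : 1 < p ^ 2 := Nat.one_lt_pow (by norm_num) hpp.one_lt
          exact commute_of_commute_pow hN hcop hgt h
        · intro h
          exact ((show Commute g u₀ from h).pow_right i).eq
      rw [hstep1, hstep2]
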